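/- For t ∈ (0, π/2), the map ψ_t: B_2 → B_2 on the open unit ball of ℂ² given by ψ_t(z,w) = (z sin t, cos t) is a holomorphic self-map of the ball, and at x = 0 it satisfies (1-‖x‖²)/sqrt(1-‖ψ_t(x)‖²) · ‖ψ_t'(x)‖ = (sin t)/sqrt(1 - cos² t) = 1, showing the Schwarz–Pick-type bound (1-‖x‖²)/sqrt(1-‖ψ(x)‖²)·‖ψ'(x)‖ ≤ 1 is sharp. -/

import Mathlib

/-- The self-map `ψ_t(z,w) = (z sin t, cos t)` of the unit ball of `ℂ²`. -/
noncomputable def psiT (t : ℝ) (v : EuclideanSpace ℂ (Fin 2)) : EuclideanSpace ℂ (Fin 2) :=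
  WithLp.toLp 2 (fun i : Fin 2 => if i = 0 then (Real.sin t : ℂ) * v 0 else (Real.cos t : ℂ))

noncomputable def Lmap (t : ℝ) : EuclideanSpace ℂ (Fin 2) →L[ℂ] EuclideanSpace ℂ (Fin 2) :=
  (EuclideanSpace.proj (0 : Fin 2)).smulRight (EuclideanSpace.single 0 ((Real.sin t : ℂ)))

lemma apply_le_norm (v : EuclideanSpace ℂ (Fin 2)) (i : Fin 2) : ‖v i‖ ≤ ‖v‖ := by
  rw [EuclideanSpace.norm_eq]
  have : ‖v i‖ = Real.sqrt (‖v i‖ ^ 2) := by rw [Real.sqrt_sq (norm_nonneg _)]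
  rw [this]
  apply Real.sqrt_le_sqrt
  exact Finset.single_le_sum (f := fun j => ‖v j‖ ^ 2) (fun j _ => sq_nonneg _) (Finset.mem_univ i)

lemma Lmap_apply (t : ℝ) (v : EuclideanSpace ℂ (Fin 2)) (i : Fin 2) :
    Lmap t v i = if i = 0 then (Real.sin t : ℂ) * v 0 else 0 := by
  simp [Lmap, EuclideanSpace.single_apply, smul_eq_mul]
  by_cases h : i = 0 <;> simp [h, mul_comm]

lemma psiT_eq (t : ℝ) : psiT t = fun v => Lmap t v + EuclideanSpace.single 1 ((Real.cos t : ℂ)) := by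
  funext v
  ext i
  fin_cases i <;>
    simp [psiT, Lmap_apply, EuclideanSpace.single_apply, PiLp.add_apply]

lemma norm_Lmap (t : ℝ) (ht : 0 ≤ Real.sin t) : ‖Lmap t‖ = Real.sin t := by
  apply le_antisymm
  · apply ContinuousLinearMap.opNorm_le_bound _ ht
    intro v
    have h1 : ‖Lmap t v‖ = Real.sin t * ‖v 0‖ := by
      rw [EuclideanSpace.norm_eq]
      simp [Lmap_apply, Fin.sum_univ_two, mul_pow, Complex.norm_real, abs_of_nonneg ht, -Complex.ofReal_sin]
      exact Or.inl (Real.sqrt_sq ht)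
    rw [h1]
    exact mul_le_mul_of_nonneg_left (apply_le_norm v 0) ht
  · have h := (Lmap t).le_opNorm (EuclideanSpace.single 0 (1 : ℂ))
    rw [EuclideanSpace.norm_single] at h
    have h2 : ‖Lmap t (EuclideanSpace.single 0 (1 : ℂ))‖ = Real.sin t := by
      have : Lmap t (EuclideanSpace.single 0 (1 : ℂ)) =
          EuclideanSpace.single 0 ((Real.sin t : ℂ)) := by
        ext i
        simp [Lmap_apply, EuclideanSpace.single_apply]
      rw [this, EuclideanSpace.norm_single]
      simp [Complex.norm_real, abs_of_nonneg ht, -Complex.ofReal_sin]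
    simpa [h2] using h

theorem stmt12 (t : ℝ) (ht : t ∈ Set.Ioo 0 (Real.pi / 2)) :
    (∀ v ∈ Metric.ball (0 : EuclideanSpace ℂ (Fin 2)) 1,
        psiT t v ∈ Metric.ball (0 : EuclideanSpace ℂ (Fin 2)) 1) ∧
    Differentiable ℂ (psiT t) ∧
    (1 - ‖(0 : EuclideanSpace ℂ (Fin 2))‖^2) / Real.sqrt (1 - ‖psiT t 0‖^2) *
        ‖fderiv ℂ (psiT t) 0‖ = Real.sin t / Real.sqrt (1 - Real.cos t ^ 2) ∧
    Real.sin t / Real.sqrt (1 - Real.cos t ^ 2) = 1 := by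
  obtain ⟨ht0, ht1⟩ := ht
  have hs : 0 < Real.sin t := Real.sin_pos_of_pos_of_lt_pi ht0 (lt_trans ht1 (by linarith [Real.pi_pos]))
  have hc : 0 < Real.cos t := Real.cos_pos_of_mem_Ioo ⟨by linarith [Real.pi_pos], ht1⟩
  have hsc : Real.sin t ^ 2 + Real.cos t ^ 2 = 1 := Real.sin_sq_add_cos_sq t
  have hnorm0 : ‖psiT t 0‖ = Real.cos t := by
    rw [EuclideanSpace.norm_eq]
    simp [psiT, Fin.sum_univ_two, Complex.norm_real, abs_of_nonneg hc.le, -Complex.ofReal_cos]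
    rw [Real.sqrt_sq hc.le]
  have hsqrt : Real.sqrt (1 - Real.cos t ^ 2) = Real.sin t := by
    have : 1 - Real.cos t ^ 2 = Real.sin t ^ 2 := by linarith
    rw [this, Real.sqrt_sq hs.le]
  have hdiff : Differentiable ℂ (psiT t) := by
    rw [psiT_eq]
    exact (Lmap t).differentiable.add_const _
  refine ⟨?_, hdiff, ?_, ?_⟩
  · intro v hv
    rw [Metric.mem_ball, dist_zero_right] at hv ⊢
    have hv0 : ‖v 0‖ ≤ ‖v‖ := apply_le_norm v 0
    have h1 : ‖psiT t v‖ ^ 2 = Real.sin t ^ 2 * ‖v 0‖ ^ 2 + Real.cos t ^ 2 := by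
      rw [EuclideanSpace.norm_eq]
      rw [Real.sq_sqrt (Finset.sum_nonneg fun i _ => sq_nonneg _)]
      simp [psiT, Fin.sum_univ_two, Complex.norm_real, abs_of_nonneg hc.le, abs_of_nonneg hs.le, mul_pow, -Complex.ofReal_cos, -Complex.ofReal_sin]
    have h2 : ‖psiT t v‖ ^ 2 < 1 := by
      rw [h1]
      have : ‖v 0‖ ^ 2 < 1 := by
        have := hv0.trans_lt hv
        nlinarith [norm_nonneg (v 0)]
      nlinarith [pow_pos hs 2, sq_nonneg (‖v 0‖)]
    nlinarith [norm_nonneg (psiT t v), sq_nonneg (‖psiT t v‖ - 1)]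
  · have hfd : fderiv ℂ (psiT t) 0 = Lmap t := by
      rw [psiT_eq]
      have : HasFDerivAt (fun v => Lmap t v + EuclideanSpace.single 1 ((Real.cos t : ℂ)))
          (Lmap t) 0 := ((Lmap t).hasFDerivAt).add_const _
      exact this.fderiv
    rw [hfd, norm_Lmap t hs.le, hnorm0, hsqrt]
    simp
    rw [div_self hs.ne', inv_mul_cancel₀ hs.ne']
  · rw [hsqrt, div_self hs.ne']
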